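/- For s ≠ t in (-1,1), ∂/∂t c(s,t) = -sgn(t-s)·|μ(s,t)|·c(s,t)/(1-t²), where c(s,t) = √((1-s²)(1-t²))/(1-st) and μ(s,t) = (s-t)/(1-st). -/

import Mathlib

/-- ∂/∂t c(s,t) = -sgn(t-s) |μ(s,t)| c(s,t)/(1-t²) for s ≠ t in (-1,1), where
c(s,t) = √((1-s²)(1-t²))/(1-st) and μ(s,t) = (s-t)/(1-st). -/
theorem deriv_c (s t : ℝ)
    (hs : s ∈ Set.Ioo (-1 : ℝ) 1) (ht : t ∈ Set.Ioo (-1 : ℝ) 1) (hst : s ≠ t) :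
    HasDerivAt (fun u : ℝ => Real.sqrt ((1 - s ^ 2) * (1 - u ^ 2)) / (1 - s * u))
      (-(Real.sign (t - s)) * |(s - t) / (1 - s * t)|
        * (Real.sqrt ((1 - s ^ 2) * (1 - t ^ 2)) / (1 - s * t)) / (1 - t ^ 2)) t := by
  obtain ⟨hs1, hs2⟩ := hs
  obtain ⟨ht1, ht2⟩ := ht
  have hs2' : (0:ℝ) < 1 - s^2 := by nlinarith
  have ht2' : (0:ℝ) < 1 - t^2 := by nlinarith
  have hst' : (0:ℝ) < 1 - s * t := by nlinarith
  have hDpos : (0:ℝ) < (1 - s^2) * (1 - t^2) := mul_pos hs2' ht2'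
  have hsqrt : 0 < Real.sqrt ((1 - s^2) * (1 - t^2)) := Real.sqrt_pos.mpr hDpos
  have h1 : HasDerivAt (fun u : ℝ => (1 - s^2) * (1 - u^2)) ((1 - s^2) * (-(2*t))) t := by
    have := ((hasDerivAt_pow 2 t).const_sub 1).const_mul (1 - s^2)
    simpa [mul_comm, mul_assoc] using this
  have h2 := h1.sqrt (ne_of_gt hDpos)
  have h3 : HasDerivAt (fun u : ℝ => 1 - s * u) (-s) t := by
    simpa using ((hasDerivAt_id t).const_mul s).const_sub 1
  have h4 : HasDerivAt (fun u : ℝ => Real.sqrt ((1 - s^2) * (1 - u^2)) / (1 - s * u)) _ t :=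
    h2.div h3 (ne_of_gt hst')
  convert h4 using 1
  have hsq : Real.sqrt ((1 - s^2) * (1 - t^2)) ^ 2 = (1 - s^2) * (1 - t^2) :=
    Real.sq_sqrt hDpos.le
  generalize hR : Real.sqrt ((1 - s^2) * (1 - t^2)) = R at *
  rcases lt_or_gt_of_ne hst with h | h
  · rw [Real.sign_of_pos (by linarith : (0:ℝ) < t - s),
      abs_of_neg (by exact div_neg_of_neg_of_pos (by linarith) hst')]
    field_simp
    linear_combination ((s - t) - s*(1 - t^2)) * hsq
  · rw [Real.sign_of_neg (by linarith : t - s < (0:ℝ)),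
      abs_of_pos (by exact div_pos (by linarith) hst')]
    field_simp
    linear_combination ((s - t) - s*(1 - t^2)) * hsq
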